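/- Let 1 ≤ p ≤ ∞, q the conjugate exponent, Y ∈ L^q_d and v ∈ M, and define R : L^p_d → 𝒫(M) by R(X) = F^M_{(Y,v)}[−X] = {u ∈ M : E[(−X)ᵀY] ≤ vᵀu}. Then R is M-translative if and only if v ∈ E[Y] + M^⊥, where E[Y] ∈ ℝ^d is the (componentwise) expectation of Y. -/

import Mathlib

open MeasureTheory Set Filter Topology Pointwise ENNReal

noncomputable section

/-- `ℝ^d` -/
abbrev Vec (d : ℕ) := Fin d → ℝ

/-- the Euclidean dot (bilinear) pairing `vᵀu` on `ℝ^d` -/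
def dotp {d : ℕ} (v u : Vec d) : ℝ := ∑ i, v i * u i

/-- the nonnegative orthant `ℝ^d_+` -/
def posOrthant (d : ℕ) : Set (Vec d) := {x | ∀ i, 0 ≤ x i}

/-- the (positive) dual cone of a set `C ⊆ ℝ^d` -/
def posDual {d : ℕ} (C : Set (Vec d)) : Set (Vec d) := {v | ∀ x ∈ C, 0 ≤ dotp v x}

/-- the orthogonal complement `M^⊥` of a subspace -/
def perpSet {d : ℕ} (M : Submodule ℝ (Vec d)) : Set (Vec d) := {v | ∀ u ∈ M, dotp v u = 0}

/-- the half space `G(w) = {x : wᵀx ≥ 0}` -/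
def Gset {d : ℕ} (w : Vec d) : Set (Vec d) := {x | 0 ≤ dotp w x}

/-- a closed convex cone `K` with `ℝ^d_+ ⊆ K ≠ ℝ^d` (a solvency cone) -/
def IsSolvencyCone {d : ℕ} (K : Set (Vec d)) : Prop :=
  IsClosed K ∧ Convex ℝ K ∧ (∀ t : ℝ, 0 < t → ∀ x ∈ K, t • x ∈ K) ∧
    posOrthant d ⊆ K ∧ K ≠ univ

variable {Ω : Type*} [MeasurableSpace Ω]

/-- the constant (deterministic) random vector `u𝟙 ∈ L^p_d` -/
def constLp (μ : Measure Ω) [IsFiniteMeasure μ] (d : ℕ) (p : ℝ≥0∞) (u : Vec d) :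
    Lp (Vec d) p μ := MeasureTheory.Lp.const p μ u

/-- the cone `(L^p_d)_+` of a.s. componentwise nonnegative elements of `L^p_d` -/
def LpNonneg (μ : Measure Ω) [IsFiniteMeasure μ] (d : ℕ) (p : ℝ≥0∞) :
    Set (Lp (Vec d) p μ) := {X | ∀ᵐ ω ∂μ, ∀ i, 0 ≤ X ω i}

/-- an acceptance set in `L^p_d` -/
def IsAcceptanceSet {μ : Measure Ω} [IsFiniteMeasure μ] {d : ℕ} {p : ℝ≥0∞}
    (A : Set (Lp (Vec d) p μ)) : Prop :=
  (∃ x : Vec d, constLp μ d p x ∈ A) ∧ (∃ x : Vec d, constLp μ d p x ∉ A) ∧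
    ∀ X ∈ A, ∀ Y ∈ LpNonneg μ d p, X + Y ∈ A

/-- the function `R_A` induced by a set `A ⊆ L^p_d` -/
def RA {μ : Measure Ω} [IsFiniteMeasure μ] {d : ℕ} {p : ℝ≥0∞} (M : Submodule ℝ (Vec d))
    (A : Set (Lp (Vec d) p μ)) (X : Lp (Vec d) p μ) : Set (Vec d) :=
  {u | u ∈ M ∧ X + constLp μ d p u ∈ A}

/-- the acceptance set `A_R` induced by a function `R` -/
def AR {μ : Measure Ω} {d : ℕ} {p : ℝ≥0∞} (R : Lp (Vec d) p μ → Set (Vec d)) :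
    Set (Lp (Vec d) p μ) := {X | 0 ∈ R X}

/-- `R` is translative in `M`: `R(X + u𝟙) = R(X) − u` for `u ∈ M` -/
def MTranslative {μ : Measure Ω} [IsFiniteMeasure μ] {d : ℕ} {p : ℝ≥0∞}
    (M : Submodule ℝ (Vec d)) (R : Lp (Vec d) p μ → Set (Vec d)) : Prop :=
  ∀ X : Lp (Vec d) p μ, ∀ u ∈ M, R (X + constLp μ d p u) = (fun w => w - u) '' R X

/-- `R` is `B`-monotone: `X² − X¹ ∈ B ⟹ R(X²) ⊇ R(X¹)` -/
def BMonotone {μ : Measure Ω} {d : ℕ} {p : ℝ≥0∞} (B : Set (Lp (Vec d) p μ))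
    (R : Lp (Vec d) p μ → Set (Vec d)) : Prop :=
  ∀ X₁ X₂ : Lp (Vec d) p μ, X₂ - X₁ ∈ B → R X₁ ⊆ R X₂

/-- a (set-valued) risk measure: an `M`-translative, `(L^p_d)_+`-monotone function
mapping into the power set of `M` -/
def IsRiskMeasure {μ : Measure Ω} [IsFiniteMeasure μ] {d : ℕ} {p : ℝ≥0∞}
    (M : Submodule ℝ (Vec d)) (R : Lp (Vec d) p μ → Set (Vec d)) : Prop :=
  (∀ X, R X ⊆ (M : Set (Vec d))) ∧ MTranslative M R ∧ BMonotone (LpNonneg μ d p) R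

/-- `R` is finite at zero -/
def FiniteAtZero {μ : Measure Ω} {d : ℕ} {p : ℝ≥0∞} (M : Submodule ℝ (Vec d))
    (R : Lp (Vec d) p μ → Set (Vec d)) : Prop :=
  R 0 ≠ ∅ ∧ R 0 ≠ (M : Set (Vec d))

/-- measurability of a set-valued map -/
def MeasurableSetValued {d : ℕ} (K : Ω → Set (Vec d)) : Prop :=
  ∀ B : Set (Vec d), IsOpen B → MeasurableSet {ω | (K ω ∩ B).Nonempty}

/-- `L^p_d(K) = {X ∈ L^p_d : X(ω) ∈ K(ω)` a.s.`}` -/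
def LpSection (μ : Measure Ω) [IsFiniteMeasure μ] (d : ℕ) (p : ℝ≥0∞)
    (K : Ω → Set (Vec d)) : Set (Lp (Vec d) p μ) := {X | ∀ᵐ ω ∂μ, X ω ∈ K ω}


/-- the bilinear pairing `(X,Y) ↦ E[XᵀY]` between `L^p_d` and `L^q_d` -/
def pairLp {μ : Measure Ω} {d : ℕ} {p q : ℝ≥0∞} (X : Lp (Vec d) p μ)
    (Y : Lp (Vec d) q μ) : ℝ := ∫ ω, dotp (X ω) (Y ω) ∂μ

/-- the componentwise expectation `E[Y] ∈ ℝ^d` -/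
def meanVec {d : ℕ} {r : ℝ≥0∞} (μ : Measure Ω) (Y : Lp (Vec d) r μ) : Vec d :=
  fun i => ∫ ω, Y ω i ∂μ

/-- the set-valued function `F^M_{(Y,v)}[X] = {u ∈ M : E[XᵀY] ≤ vᵀu}` -/
def FM {μ : Measure Ω} {d : ℕ} {p q : ℝ≥0∞} (M : Submodule ℝ (Vec d))
    (Y : Lp (Vec d) q μ) (v : Vec d) (X : Lp (Vec d) p μ) : Set (Vec d) :=
  {u | u ∈ M ∧ pairLp X Y ≤ dotp v u}

section AuxDotp

lemma dotp_comm' {d : ℕ} (v u : Vec d) : dotp v u = dotp u v := by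
  simp [dotp, mul_comm]

lemma dotp_add_right' {d : ℕ} (v a b : Vec d) : dotp v (a + b) = dotp v a + dotp v b := by
  simp [dotp, mul_add, Finset.sum_add_distrib]

lemma dotp_neg_right' {d : ℕ} (v a : Vec d) : dotp v (-a) = -dotp v a := by
  simp [dotp]

lemma dotp_sub_right' {d : ℕ} (v a b : Vec d) : dotp v (a - b) = dotp v a - dotp v b := by
  simp [dotp, mul_sub, Finset.sum_sub_distrib]

lemma dotp_sub_left' {d : ℕ} (a b u : Vec d) : dotp (a - b) u = dotp a u - dotp b u := by
  simp [dotp, sub_mul, Finset.sum_sub_distrib]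

lemma dotp_zero_right' {d : ℕ} (v : Vec d) : dotp v 0 = 0 := by simp [dotp]

lemma dotp_neg_add_expand {d : ℕ} (x u y : Vec d) :
    dotp (-(x + u)) y = -(dotp x y) - dotp u y := by
  simp only [dotp, sub_eq_add_neg, ← Finset.sum_neg_distrib, ← Finset.sum_add_distrib]
  exact Finset.sum_congr rfl fun i _ => by simp only [Pi.neg_apply, Pi.add_apply]; ring

end AuxDotp

section AuxLp

variable {Ω : Type*} [MeasurableSpace Ω]

lemma memLp_apply' {d : ℕ} {r : ℝ≥0∞} {μ : Measure Ω} (X : Lp (Vec d) r μ) (i : Fin d) :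
    MemLp (fun ω => X ω i) r μ := by
  refine MemLp.of_le (Lp.memLp X)
    ((continuous_apply i).comp_aestronglyMeasurable (Lp.aestronglyMeasurable X)) ?_
  exact Filter.Eventually.of_forall fun ω => by
    simpa using norm_le_pi_norm (X ω) i

lemma integrable_mul_apply' {d : ℕ} {p q : ℝ≥0∞} {μ : Measure Ω} [IsFiniteMeasure μ]
    (hpq : 1 / p + 1 / q = 1) (X : Lp (Vec d) p μ) (Y : Lp (Vec d) q μ) (i : Fin d) :
    Integrable (fun ω => X ω i * Y ω i) μ := by
  have h : MemLp ((fun ω => Y ω i) • (fun ω => X ω i)) 1 μ :=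
    (memLp_apply' X i).smul (memLp_apply' Y i)
      (hpqr := ⟨by rw [inv_one, add_comm]; simpa [one_div] using hpq⟩)
  have h2 := memLp_one_iff_integrable.mp h
  simpa [Pi.smul_apply, smul_eq_mul, mul_comm, Pi.mul_def] using h2

lemma integrable_dotp' {d : ℕ} {p q : ℝ≥0∞} {μ : Measure Ω} [IsFiniteMeasure μ]
    (hpq : 1 / p + 1 / q = 1) (X : Lp (Vec d) p μ) (Y : Lp (Vec d) q μ) :
    Integrable (fun ω => dotp (X ω) (Y ω)) μ := by
  simp only [dotp]
  exact integrable_finset_sum _ fun i _ => integrable_mul_apply' hpq X Y i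

lemma one_le_q_of_conj {p q : ℝ≥0∞} (hpq : 1 / p + 1 / q = 1) : 1 ≤ q := by
  have h : 1 / q ≤ 1 / p + 1 / q := le_add_self
  rw [hpq, one_div, ENNReal.inv_le_one] at h
  exact h

lemma integrable_apply_of_conj {d : ℕ} {q : ℝ≥0∞} {μ : Measure Ω} [IsFiniteMeasure μ]
    (hq1 : 1 ≤ q) (Y : Lp (Vec d) q μ) (i : Fin d) :
    Integrable (fun ω => Y ω i) μ :=
  (memLp_apply' Y i).integrable hq1

lemma integrable_dotp_const' {d : ℕ} {q : ℝ≥0∞} {μ : Measure Ω} [IsFiniteMeasure μ]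
    (hq1 : 1 ≤ q) (Y : Lp (Vec d) q μ) (u : Vec d) :
    Integrable (fun ω => dotp u (Y ω)) μ := by
  simp only [dotp]
  exact integrable_finset_sum _ fun i _ =>
    (integrable_apply_of_conj hq1 Y i).const_mul _

lemma integral_dotp_const' {d : ℕ} {q : ℝ≥0∞} {μ : Measure Ω} [IsFiniteMeasure μ]
    (hq1 : 1 ≤ q) (Y : Lp (Vec d) q μ) (u : Vec d) :
    ∫ ω, dotp u (Y ω) ∂μ = dotp u (meanVec μ Y) := by
  simp only [dotp]
  rw [integral_finset_sum _ fun i _ => (integrable_apply_of_conj hq1 Y i).const_mul _]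
  exact Finset.sum_congr rfl fun i _ => by rw [integral_const_mul]; rfl

lemma pairLp_neg' {d : ℕ} {p q : ℝ≥0∞} {μ : Measure Ω} [IsFiniteMeasure μ]
    (X : Lp (Vec d) p μ) (Y : Lp (Vec d) q μ) :
    pairLp (-X) Y = - ∫ ω, dotp (X ω) (Y ω) ∂μ := by
  rw [pairLp, ← integral_neg]
  refine integral_congr_ae ?_
  filter_upwards [Lp.coeFn_neg X] with ω hω
  rw [hω]
  simp [dotp]

lemma pair_neg_add_const' {d : ℕ} {p q : ℝ≥0∞} {μ : Measure Ω} [IsFiniteMeasure μ]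
    (hpq : 1 / p + 1 / q = 1) (X : Lp (Vec d) p μ) (Y : Lp (Vec d) q μ) (u : Vec d) :
    pairLp (-(X + constLp μ d p u)) Y = pairLp (-X) Y - dotp u (meanVec μ Y) := by
  have hq1 : 1 ≤ q := one_le_q_of_conj hpq
  have h1 : (↑(-(X + constLp μ d p u)) : Ω → Vec d) =ᵐ[μ] fun ω => -(X ω + u) := by
    filter_upwards [Lp.coeFn_neg (X + constLp μ d p u), Lp.coeFn_add X (constLp μ d p u),
      Lp.coeFn_const (μ := μ) (p := p) u] with ω hneg hadd hconst
    simp only [constLp] at hneg hadd ⊢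
    rw [hneg, Pi.neg_apply, hadd, Pi.add_apply, hconst]
    rfl
  have h2 : pairLp (-(X + constLp μ d p u)) Y
      = ∫ ω, (-(dotp (X ω) (Y ω)) - dotp u (Y ω)) ∂μ := by
    rw [pairLp]
    refine integral_congr_ae ?_
    filter_upwards [h1] with ω hω
    rw [hω, dotp_neg_add_expand]
  have hint : Integrable (fun ω => -(dotp (X ω) (Y ω))) μ := (integrable_dotp' hpq X Y).neg
  rw [h2, integral_sub hint (integrable_dotp_const' hq1 Y u),
    integral_neg, ← pairLp_neg' X Y, integral_dotp_const' hq1 Y u]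

end AuxLp

/-- `R(X) = F^M_{(Y,v)}[−X]` is `M`-translative iff `v ∈ E[Y] + M^⊥`. -/
theorem FM_translative_iff
    (μ : Measure Ω) [IsProbabilityMeasure μ] (d : ℕ) (hd : 1 ≤ d)
    (p q : ℝ≥0∞) (hp : 1 ≤ p) (hpq : 1 / p + 1 / q = 1)
    (M : Submodule ℝ (Vec d)) (Y : Lp (Vec d) q μ) (v : Vec d) (hv : v ∈ M) :
    MTranslative M (fun X : Lp (Vec d) p μ => FM M Y v (-X)) ↔
      v ∈ {meanVec μ Y} + perpSet M := by
  have hq1 : 1 ≤ q := one_le_q_of_conj hpq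
  set E := meanVec μ Y with hE
  have key : ∀ (X : Lp (Vec d) p μ) (u : Vec d),
      pairLp (-(X + constLp μ d p u)) Y = pairLp (-X) Y - dotp u E :=
    fun X u => pair_neg_add_const' hpq X Y u
  have hpair0 : pairLp (-(0 : Lp (Vec d) p μ)) Y = 0 := by
    rw [pairLp_neg']
    have : (fun ω => dotp ((0 : Lp (Vec d) p μ) ω) (Y ω)) =ᵐ[μ] fun _ => (0 : ℝ) := by
      filter_upwards [Lp.coeFn_zero (Vec d) p μ] with ω hω
      rw [hω]; simp [dotp]
    rw [integral_congr_ae this]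
    simp
  constructor
  · intro htr
    have main : ∀ u ∈ M, dotp v u ≤ dotp u E := by
      intro u hu
      have hset := htr 0 u hu
      have hmem : -u ∈ (fun w => w - u) ''
          FM M Y v (-(0 : Lp (Vec d) p μ)) := by
        refine ⟨0, ⟨M.zero_mem, ?_⟩, by simp⟩
        rw [hpair0, dotp_zero_right']
      rw [← hset] at hmem
      obtain ⟨-, hle⟩ := hmem
      rw [key 0 u, hpair0, dotp_neg_right'] at hle
      linarith
    have heq : ∀ u ∈ M, dotp v u = dotp u E := by
      intro u hu
      refine le_antisymm (main u hu) ?_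
      have h2 := main (-u) (M.neg_mem hu)
      rw [dotp_neg_right'] at h2
      have h3 : dotp (-u) E = -dotp u E := by rw [dotp_comm', dotp_neg_right', dotp_comm']
      rw [h3] at h2
      linarith
    refine Set.mem_add.mpr ⟨E, rfl, v - E, ?_, by abel⟩
    intro u hu
    rw [dotp_sub_left']
    have := heq u hu
    rw [dotp_comm' u E] at this
    linarith
  · intro hvmem
    obtain ⟨e, he, w, hw, hvw⟩ := Set.mem_add.mp hvmem
    rw [Set.mem_singleton_iff] at he
    subst he
    have hvu : ∀ u ∈ M, dotp v u = dotp u E := by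
      intro u hu
      have hw0 := hw u hu
      have : dotp v u = dotp (E + w) u := by rw [hvw]
      rw [this, dotp_comm', dotp_add_right', dotp_comm' u E, dotp_comm' u w, hw0, add_zero]
    intro X u hu
    ext z
    simp only [FM, Set.mem_image, Set.mem_setOf_eq]
    rw [key X u]
    constructor
    · rintro ⟨hzM, hle⟩
      refine ⟨z + u, ⟨M.add_mem hzM hu, ?_⟩, by abel⟩
      rw [dotp_add_right', hvu u hu]
      linarith
    · rintro ⟨w', ⟨hw'M, hle⟩, rfl⟩
      refine ⟨M.sub_mem hw'M hu, ?_⟩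
      rw [dotp_sub_right', hvu u hu] at *
      linarith
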